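/- Every pattern in which each occurring variable occurs at least 4 times is 2-avoidable; that is, there exist infinitely many words over a 2-letter alphabet having no factor that is an instance of the pattern. -/

import Mathlib

/-- A word `w` is an instance of the pattern `p` if there is a non-erasing
substitution (equivalently, a non-erasing monoid morphism on free monoids)
sending `p` to `w`. -/
def IsInstance {Δ α : Type*} (p : List Δ) (w : List α) : Prop :=
  ∃ f : Δ → List α, (∀ v, f v ≠ []) ∧ (p.map f).flatten = w

/-- A word `w` avoids the pattern `p` if no factor of `w` is an instance of `p`. -/
def Avoids {Δ α : Type*} (w : List α) (p : List Δ) : Prop :=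
  ∀ x : List α, x <:+: w → ¬ IsInstance p x

set_option linter.unusedSectionVars false

namespace AvoidPf


def tmv (n : ℕ) : ℕ := (Nat.digits 2 n).sum % 2

def tmF (n : ℕ) : Fin 2 := ⟨tmv n, Nat.mod_lt _ (by norm_num)⟩

lemma tmv_two_mul (n : ℕ) : tmv (2 * n) = tmv n := by
  rcases Nat.eq_zero_or_pos n with h | h
  · simp [h]
  · unfold tmv
    rw [Nat.digits_def' (by norm_num : 1 < 2) (by omega : 0 < 2 * n),
      (by omega : 2 * n % 2 = 0), (by omega : 2 * n / 2 = n)]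
    simp

lemma tmv_two_mul_add_one (n : ℕ) : tmv (2 * n + 1) = 1 - tmv n := by
  unfold tmv
  rw [Nat.digits_def' (by norm_num : 1 < 2) (by omega : 0 < 2 * n + 1),
    (by omega : (2 * n + 1) % 2 = 1), (by omega : (2 * n + 1) / 2 = n)]
  have : (Nat.digits 2 n).sum % 2 < 2 := Nat.mod_lt _ (by norm_num)
  simp only [List.sum_cons]
  omega

lemma tmv_lt (n : ℕ) : tmv n < 2 := Nat.mod_lt _ (by norm_num)

lemma tm_two_mul (n : ℕ) : tmF (2 * n) = tmF n := by
  apply Fin.ext; exact tmv_two_mul n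

lemma tm_two_mul_add_one (n : ℕ) : tmF (2 * n + 1) ≠ tmF n := by
  simp only [tmF, ne_eq, Fin.ext_iff, Fin.val_mk]
  have h1 := tmv_two_mul_add_one n
  have h2 := tmv_lt n
  omega

lemma fin2_eq_of_ne {a b c : Fin 2} (h1 : a ≠ c) (h2 : b ≠ c) : a = b := by
  fin_cases a <;> fin_cases b <;> fin_cases c <;> simp_all

lemma tm_even_ne (m : ℕ) : tmF (2 * m) ≠ tmF (2 * m + 1) := by
  rw [tm_two_mul]
  exact fun h => tm_two_mul_add_one m h.symm

lemma tm_no_consec3 (j : ℕ) : ¬ (tmF j = tmF (j + 1) ∧ tmF (j + 1) = tmF (j + 2)) := by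
  rcases Nat.even_or_odd j with ⟨m, hm⟩ | ⟨m, hm⟩
  · rintro ⟨h1, -⟩
    have h := tm_even_ne m
    rw [show 2 * m = j by omega] at h
    exact h h1
  · rintro ⟨-, h2⟩
    have h := tm_even_ne (m + 1)
    rw [show 2 * (m + 1) = j + 1 by omega] at h
    exact h (by rw [show j + 1 + 1 = j + 2 by omega]; exact h2)

section
variable {s ℓ : ℕ}

lemma tmF_eq_of (H : ∀ i < 3 * ℓ, tmF (s + i) = tmF (s + i + ℓ)) {a b i : ℕ}
    (hi : i < 3 * ℓ) (h1 : s + i = a) (h2 : s + i + ℓ = b) : tmF a = tmF b := by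
  subst h1; subst h2; exact H i hi

end

/-- The Thue–Morse sequence contains no 4th power. -/
theorem tm_no4 : ∀ ℓ, 1 ≤ ℓ → ∀ s, ¬ (∀ i < 3 * ℓ, tmF (s + i) = tmF (s + i + ℓ)) := by
  intro ℓ
  induction ℓ using Nat.strong_induction_on with
  | _ ℓ IH =>
    intro hℓ s H
    rcases Nat.even_or_odd ℓ with ⟨ℓ', hℓ'⟩ | ⟨k, hk⟩
    · -- even case: descend
      have hℓ'1 : 1 ≤ ℓ' := by omega
      apply IH ℓ' (by omega) hℓ'1 ((s + 1) / 2)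
      intro j hj
      set q := (s + 1) / 2 with hqdef
      have e : tmF (2 * (q + j)) = tmF (2 * (q + j + ℓ')) :=
        tmF_eq_of H (i := 2 * (q + j) - s) (by omega) (by omega) (by omega)
      calc tmF (q + j) = tmF (2 * (q + j)) := (tm_two_mul _).symm
        _ = tmF (2 * (q + j + ℓ')) := e
        _ = tmF (q + j + ℓ') := tm_two_mul _
    · -- odd case
      rcases Nat.eq_zero_or_pos k with hk0 | hk1
      · -- ℓ = 1
        subst hk0
        have e1 : tmF s = tmF (s + 1) :=
          tmF_eq_of H (i := 0) (by omega) (by omega) (by omega)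
        have e2 : tmF (s + 1) = tmF (s + 2) :=
          tmF_eq_of H (i := 1) (by omega) (by omega) (by omega)
        exact tm_no_consec3 s ⟨e1, e2⟩
      · -- ℓ = 2k+1, k ≥ 1
        have key : ∀ n, s ≤ 2 * n → 2 * n + 1 < s + 3 * ℓ → tmF (n + k) = tmF (n + k + 1) := by
          intro n hn1 hn2
          have eA : tmF (2 * n) = tmF (2 * (n + k) + 1) :=
            tmF_eq_of H (i := 2 * n - s) (by omega) (by omega) (by omega)
          have hA : tmF (n + k) ≠ tmF n := by
            intro h
            apply tm_two_mul_add_one (n + k)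
            rw [← eA, tm_two_mul, h]
          have eB : tmF (2 * n + 1) = tmF (2 * (n + k + 1)) :=
            tmF_eq_of H (i := 2 * n + 1 - s) (by omega) (by omega) (by omega)
          have hB : tmF (n + k + 1) ≠ tmF n := by
            intro h
            apply tm_two_mul_add_one n
            rw [eB, tm_two_mul, h]
          exact fin2_eq_of_ne hA hB
        set n0 := (s + 1) / 2 with hn0
        have e1 := key n0 (by omega) (by omega)
        have e2 := key (n0 + 1) (by omega) (by omega)
        rw [(by omega : n0 + 1 + k = n0 + k + 1), (by omega : n0 + k + 1 + 1 = n0 + k + 2)] at e2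
        exact tm_no_consec3 (n0 + k) ⟨e1, e2⟩


section P1
variable {Δ α : Type*} [DecidableEq Δ]

lemma isInstance_ne_nil {p : List Δ} {x : List α} (hp : p ≠ []) (h : IsInstance p x) :
    x ≠ [] := by
  obtain ⟨f, hf, hfx⟩ := h
  obtain ⟨v, q, rfl⟩ := List.exists_cons_of_ne_nil hp
  simp only [List.map_cons, List.flatten_cons] at hfx
  intro hx
  rw [hx] at hfx
  exact hf v (List.append_eq_nil_iff.mp hfx).1

lemma avoids_infix {p : List Δ} {w x : List α} (h : Avoids w p) (hx : x <:+: w) :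
    Avoids x p := fun y hy => h y (hy.trans hx)

lemma avoids_nil {p : List Δ} (hp : p ≠ []) : Avoids ([] : List α) p := by
  intro x hx hi
  exact isInstance_ne_nil hp hi (List.eq_nil_of_infix_nil hx)

noncomputable def tmWord (n : ℕ) : List (Fin 2) := List.ofFn fun i : Fin n => tmF i

@[simp] lemma tmWord_length (n : ℕ) : (tmWord n).length = n := by simp [tmWord]

lemma flatten_replicate_succ' {u : List α} :
    ∀ c, (List.replicate (c + 1) u).flatten = (List.replicate c u).flatten ++ u := by
  intro c
  induction c with
  | zero => simp
  | succ c ih =>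
    rw [List.replicate_succ' (n := c + 1), List.flatten_append]
    simp

lemma length_flatten_replicate {u : List α} (c : ℕ) :
    (List.replicate c u).flatten.length = c * u.length := by
  induction c with
  | zero => simp
  | succ c ih => rw [List.replicate_succ, List.flatten_cons, List.length_append, ih]; ring

lemma flatten_replicate_period {u : List α} {c : ℕ} (hc : 1 ≤ c)
    {x : List α} (hx : x = (List.replicate c u).flatten)
    {i : ℕ} (hi : i + u.length < x.length) :
    x[i]'(by omega) = x[i + u.length]'hi := by
  obtain ⟨c', rfl⟩ : ∃ c', c = c' + 1 := ⟨c - 1, by omega⟩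
  have hy : x = (List.replicate c' u).flatten ++ u := by rw [hx, flatten_replicate_succ']
  have hy2 : x = u ++ (List.replicate c' u).flatten := by
    rw [hx, List.replicate_succ, List.flatten_cons]
  set y := (List.replicate c' u).flatten with hydef
  have hiy : i < y.length := by
    have := hy ▸ hi
    simp only [List.length_append] at this ⊢
    omega
  have h1 : x[i]'(by omega) = y[i]'hiy := by
    subst hy; rw [List.getElem_append_left]
  have h2 : x[i + u.length]'hi = y[i]'hiy := by
    have : x[i + u.length]'hi = x[u.length + i]'(by omega) := by
      congr 1; omega
    rw [this]
    subst hy2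
    rw [List.getElem_append_right (by omega)]
    congr 1
    omega
  rw [h1, h2]

lemma part1 {p : List Δ} (hp : p ≠ []) (hocc : ∀ v ∈ p, 4 ≤ p.count v)
    {v : Δ} (hall : ∀ a ∈ p, a = v) :
    ∀ n, Avoids (tmWord n) p := by
  intro n x hinf ⟨f, hf, hfx⟩
  -- x = flatten (replicate c u)
  set u := f v with hu
  set ℓ := u.length with hl
  have hℓ : 1 ≤ ℓ := List.length_pos_iff.mpr (hf v)
  have hmap : p.map f = List.replicate p.length u := by
    have hm : ∀ b ∈ p.map f, b = u := by
      intro b hb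
      simp only [List.mem_map] at hb
      obtain ⟨a, ha, rfl⟩ := hb
      rw [hall a ha]
    have := List.eq_replicate_of_mem hm
    simpa using this
  have hc : 4 ≤ p.length := by
    have hv : v ∈ p := by
      obtain ⟨a, q, rfl⟩ := List.exists_cons_of_ne_nil hp
      rw [← hall a (List.mem_cons_self)]
      exact List.mem_cons_self
    have h4 := hocc v hv
    calc 4 ≤ p.count v := h4
      _ ≤ p.length := List.count_le_length
  have hxlen : x.length = p.length * ℓ := by
    rw [← hfx, hmap, length_flatten_replicate]
  -- infix gives indices
  obtain ⟨pre, post, hw⟩ := hinf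
  have hwlen : pre.length + x.length + post.length = n := by
    have := congrArg List.length hw
    simp [List.length_append] at this
    omega
  have hidx : ∀ j (hj : j < x.length), x[j] = tmF (pre.length + j) := by
    intro j hj
    have h1 : (pre ++ (x ++ post))[pre.length + j]'(by
        simp only [List.length_append]; omega) = tmF (pre.length + j) := by
      have hw' : pre ++ (x ++ post) = tmWord n := by rw [← List.append_assoc]; exact hw
      rw [List.getElem_of_eq hw' (by
        rw [show (pre ++ (x ++ post)).length = n by
          rw [← tmWord_length n, hw']]
        omega)]
      simp [tmWord]
    rw [← h1, List.getElem_append_right (by omega)]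
    rw [List.getElem_append_left (by omega)]
    congr 1
    omega
  apply tm_no4 ℓ hℓ pre.length
  intro i hi
  have hi4 : i + ℓ < x.length := by
    have h4 : 4 * ℓ ≤ x.length := by
      rw [hxlen]; exact Nat.mul_le_mul hc (le_refl ℓ)
    omega
  have hper : x[i]'(by omega) = x[i + ℓ]'hi4 :=
    flatten_replicate_period (u := u) (c := p.length) (by omega)
      (by rw [← hfx, hmap]) hi4
  have e1 := hidx i (by omega)
  have e2 := hidx (i + ℓ) hi4
  rw [show pre.length + (i + ℓ) = pre.length + i + ℓ by omega] at e2
  rw [← e1, ← e2]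
  exact hper


end P1

noncomputable section

open Classical Finset

abbrev Bin := List (Fin 2)

def wordFin (n : ℕ) : Finset Bin :=
  Finset.image (fun f : Fin n → Fin 2 => List.ofFn f) Finset.univ

lemma mem_wordFin {n : ℕ} {w : Bin} : w ∈ wordFin n ↔ w.length = n := by
  constructor
  · rintro hm
    simp only [wordFin, Finset.mem_image] at hm
    obtain ⟨f, -, rfl⟩ := hm
    simp
  · rintro rfl
    simp only [wordFin, Finset.mem_image]
    exact ⟨fun i => w[(i : ℕ)], Finset.mem_univ _, List.ofFn_getElem⟩

lemma card_wordFin (n : ℕ) : (wordFin n).card = 2 ^ n := by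
  rw [wordFin, Finset.card_image_of_injective _ (List.ofFn_injective)]
  simp

variable [DecidableEq Δ]

def AvSet (p : List Δ) (n : ℕ) : Finset Bin :=
  (wordFin n).filter (fun w => Avoids w p)

def A (p : List Δ) (n : ℕ) : ℕ := (AvSet p n).card

lemma mem_AvSet {p : List Δ} {n : ℕ} {w : Bin} :
    w ∈ AvSet p n ↔ w.length = n ∧ Avoids w p := by
  simp [AvSet, mem_wordFin]

lemma A_zero {p : List Δ} (hp : p ≠ []) : A p 0 = 1 := by
  have : AvSet p 0 = {([] : Bin)} := by
    ext w
    simp only [mem_AvSet, Finset.mem_singleton, List.length_eq_zero_iff]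
    constructor
    · rintro ⟨rfl, -⟩; rfl
    · rintro rfl; exact ⟨rfl, avoids_nil hp⟩
  rw [A, this, Finset.card_singleton]

/-- The bad set: words of length `n+1` whose tail avoids `p` but which do not avoid `p`. -/
def BadSet (p : List Δ) (n : ℕ) : Finset Bin :=
  (wordFin (n + 1)).filter (fun w => Avoids (w.drop 1) p ∧ ¬ Avoids w p)

lemma partition_eq (p : List Δ) (n : ℕ) :
    A p (n + 1) + (BadSet p n).card = 2 * A p n := by
  set T : Finset Bin := (wordFin (n + 1)).filter (fun w => Avoids (w.drop 1) p) with hT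
  have hTcard : T.card = 2 * A p n := by
    have himg : T = Finset.image (fun x : Fin 2 × Bin => x.1 :: x.2)
        (Finset.univ ×ˢ AvSet p n) := by
      ext w
      simp only [hT, Finset.mem_filter, mem_wordFin, Finset.mem_image, Finset.mem_product,
        Finset.mem_univ, true_and, mem_AvSet]
      constructor
      · rintro ⟨hlen, hav⟩
        have hwne : w ≠ [] := by intro h; rw [h] at hlen; simp at hlen
        obtain ⟨a, l, rfl⟩ := List.exists_cons_of_ne_nil hwne
        exact ⟨(a, l), ⟨by simpa using hlen, by simpa using hav⟩, rfl⟩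
      · rintro ⟨⟨a, l⟩, ⟨hlen, hav⟩, rfl⟩
        exact ⟨by simpa using hlen, by simpa using hav⟩
    rw [himg, Finset.card_image_of_injective _ (by
      rintro ⟨a, l⟩ ⟨b, m⟩ h
      simp only [List.cons.injEq] at h
      simp [h.1, h.2])]
    simp [A, Finset.card_product]
  have hsplit : (T.filter (fun w => Avoids w p)).card
      + (T.filter (fun w => ¬ Avoids w p)).card = T.card :=
    Finset.card_filter_add_card_filter_not _
  have h1 : T.filter (fun w => Avoids w p) = AvSet p (n + 1) := by
    rw [hT, Finset.filter_filter]
    apply Finset.filter_congr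
    intro w hw
    simp only [mem_wordFin] at hw
    constructor
    · rintro ⟨-, h⟩; exact h
    · intro h
      exact ⟨avoids_infix h (List.drop_suffix 1 w).isInfix, h⟩
  have h2 : T.filter (fun w => ¬ Avoids w p) = BadSet p n := by
    rw [hT, Finset.filter_filter, BadSet]
  rw [h1, h2] at hsplit
  show (AvSet p (n + 1)).card + (BadSet p n).card = 2 * A p n
  rw [hsplit, hTcard]

/-! ### The encoding of bad words -/

variable (p : List Δ)

/-- Weighted length of a tuple assignment. -/
def M (g : Fin p.dedup.length → Bin) : ℕ :=
  ∑ i, p.count (p.dedup.get i) * (g i).length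

def WB (N : ℕ) : Finset Bin := (Finset.Icc 1 N).biUnion wordFin

lemma mem_WB {N : ℕ} {w : Bin} : w ∈ WB N ↔ 1 ≤ w.length ∧ w.length ≤ N := by
  simp only [WB, Finset.mem_biUnion, Finset.mem_Icc, mem_wordFin]
  constructor
  · rintro ⟨ℓ, ⟨h1, h2⟩, rfl⟩; exact ⟨h1, h2⟩
  · rintro ⟨h1, h2⟩; exact ⟨w.length, ⟨h1, h2⟩, rfl⟩

def Gset (N : ℕ) : Finset (Fin p.dedup.length → Bin) :=
  (Fintype.piFinset fun _ => WB N).filter (fun g => M p g ≤ N)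

lemma sum_len_flatten (f : Δ → Bin) :
    ((p.map f).flatten).length
      = ∑ i : Fin p.dedup.length, p.count (p.dedup.get i) * (f (p.dedup.get i)).length := by
  rw [List.length_flatten, List.map_map]
  have h1 : (p.map fun v => (f v).length).sum
      = ∑ v ∈ p.toFinset, p.count v • (f v).length :=
    Finset.sum_list_map_count p _
  rw [show (List.length ∘ f) = fun v => (f v).length from rfl, h1]
  have hTF : p.toFinset = p.dedup.toFinset := by
    ext a; simp
  rw [hTF]
  rw [List.sum_toFinset _ p.nodup_dedup]
  have h2 : p.dedup.map (fun v => p.count v • (f v).length)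
      = List.ofFn (fun i : Fin p.dedup.length =>
          p.count (p.dedup.get i) * (f (p.dedup.get i)).length) := by
    apply List.ext_getElem
    · simp
    · intro i h1' h2'
      simp [List.getElem_map, List.getElem_ofFn, smul_eq_mul]
  rw [h2, List.sum_ofFn]

/-- The reconstruction map. -/
def rebuild (g : Fin p.dedup.length → Bin) (u : Bin) : Bin :=
  (p.map (fun v =>
    if h : v ∈ p.dedup then g ⟨p.dedup.idxOf v, List.idxOf_lt_length_iff.2 h⟩
    else [])).flatten ++ u

/-- The encoding map. -/
def enc (w : Bin) : (Fin p.dedup.length → Bin) × Bin :=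
  if h : ∃ f : Δ → Bin, (∀ v, f v ≠ []) ∧ ((p.map f).flatten <+: w) then
    (fun i => h.choose (p.dedup.get i), w.drop ((p.map h.choose).flatten).length)
  else (fun _ => [], [])

lemma enc_spec (hp : p ≠ []) {n : ℕ} {w : Bin} (hw : w ∈ BadSet p n) :
    (enc p w).1 ∈ Gset p (n + 1) ∧
    (enc p w).2 ∈ AvSet p (n + 1 - M p (enc p w).1) ∧
    rebuild p (enc p w).1 (enc p w).2 = w := by
  obtain ⟨hwlen, hdrop, hnav⟩ : w.length = n + 1 ∧ Avoids (w.drop 1) p ∧ ¬ Avoids w p := by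
    simpa [BadSet, mem_wordFin] using hw
  -- extract a prefix instance
  have hex : ∃ f : Δ → Bin, (∀ v, f v ≠ []) ∧ ((p.map f).flatten <+: w) := by
    simp only [Avoids, not_forall, not_not] at hnav
    obtain ⟨x, hinf, f, hf, hfx⟩ := hnav
    refine ⟨f, hf, ?_⟩
    rw [hfx]
    have hwne : w ≠ [] := by intro h; rw [h] at hwlen; simp at hwlen
    obtain ⟨a, l, rfl⟩ := List.exists_cons_of_ne_nil hwne
    rcases List.infix_cons_iff.mp hinf with hpref | hinf'
    · exact hpref
    · exact absurd ⟨f, hf, hfx⟩ (hdrop x (by simpa using hinf'))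
  have henc : enc p w = (fun i => hex.choose (p.dedup.get i), w.drop ((p.map hex.choose).flatten).length) := by
    rw [enc, dif_pos hex]
  set f := hex.choose with hfdef
  obtain ⟨hf, hpref⟩ := hex.choose_spec
  set x := (p.map f).flatten with hxdef
  set m := x.length with hmdef
  set g : Fin p.dedup.length → Bin := fun i => f (p.dedup.get i) with hgdef
  have hMg : M p g = m := by
    rw [M, hmdef, hxdef, sum_len_flatten]
  have hxne : x ≠ [] := isInstance_ne_nil hp ⟨f, hf, rfl⟩
  have hm1 : 1 ≤ m := by
    rw [hmdef]
    exact List.length_pos_iff.mpr hxne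
  have hmn : m ≤ n + 1 := by
    rw [hmdef, ← hwlen]
    exact hpref.length_le
  have hterm : ∀ i : Fin p.dedup.length, (g i).length ≤ M p g := by
    intro i
    have hmem : p.dedup.get i ∈ p := List.mem_dedup.mp (List.get_mem p.dedup i)
    have hcount : 1 ≤ p.count (p.dedup.get i) := List.count_pos_iff.mpr hmem
    calc (g i).length ≤ p.count (p.dedup.get i) * (g i).length :=
          Nat.le_mul_of_pos_left _ hcount
      _ ≤ M p g := Finset.single_le_sum (f := fun j => p.count (p.dedup.get j) * (g j).length)
          (fun _ _ => Nat.zero_le _) (Finset.mem_univ i)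
  have c1 : g ∈ Gset p (n + 1) := by
    rw [Gset, Finset.mem_filter]
    constructor
    · rw [Fintype.mem_piFinset]
      intro i
      rw [mem_WB]
      refine ⟨List.length_pos_iff.mpr (hf _), ?_⟩
      calc (g i).length ≤ M p g := hterm i
        _ = m := hMg
        _ ≤ n + 1 := hmn
    · rw [hMg]; exact hmn
  have c2 : w.drop m ∈ AvSet p (n + 1 - M p g) := by
    rw [mem_AvSet]
    constructor
    · rw [List.length_drop, hwlen, hMg]
    · have hsfx : w.drop m <:+ w.drop 1 := by
        have hdd : w.drop ((m - 1) + 1) = (w.drop 1).drop (m - 1) := by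
          rw [List.drop_drop]
          congr 1
          omega
        rw [show m = (m - 1) + 1 by omega, hdd]
        exact List.drop_suffix _ _
      exact avoids_infix hdrop hsfx.isInfix
  have c3 : rebuild p g (w.drop m) = w := by
    rw [rebuild]
    have hmapeq : (p.map (fun v =>
        if h : v ∈ p.dedup then g ⟨p.dedup.idxOf v, List.idxOf_lt_length_iff.2 h⟩
        else [])) = p.map f := by
      apply List.map_congr_left
      intro v hv
      have hvd : v ∈ p.dedup := List.mem_dedup.mpr hv
      rw [dif_pos hvd]
      exact congrArg f (List.idxOf_get (List.idxOf_lt_length_iff.2 hvd))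
    rw [hmapeq, ← hxdef]
    have htk : x = w.take m := List.prefix_iff_eq_take.mp hpref
    rw [htk, List.take_append_drop]
  rw [henc]
  exact ⟨c1, c2, c3⟩

lemma bad_card_le (hp : p ≠ []) (n : ℕ) :
    (BadSet p n).card ≤ ∑ g ∈ Gset p (n + 1), A p (n + 1 - M p g) := by
  have hinj : ∀ w ∈ BadSet p n,
      (⟨(enc p w).1, (enc p w).2⟩ : Σ _ : Fin p.dedup.length → Bin, Bin)
        ∈ (Gset p (n + 1)).sigma (fun g => AvSet p (n + 1 - M p g)) := by
    intro w hw
    obtain ⟨h1, h2, -⟩ := enc_spec p hp hw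
    exact Finset.mem_sigma.mpr ⟨h1, h2⟩
  calc (BadSet p n).card
      ≤ ((Gset p (n + 1)).sigma (fun g => AvSet p (n + 1 - M p g))).card := by
        apply Finset.card_le_card_of_injOn
          (fun w => (⟨(enc p w).1, (enc p w).2⟩ : Σ _ : Fin p.dedup.length → Bin, Bin)) hinj
        intro w1 hw1 w2 hw2 heq
        have r1 := (enc_spec p hp hw1).2.2
        have r2 := (enc_spec p hp hw2).2.2
        have h1 : (enc p w1).1 = (enc p w2).1 := congrArg Sigma.fst heq
        have h2 : (enc p w1).2 = (enc p w2).2 :=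
          congrArg (fun s : (Σ _ : Fin p.dedup.length → Bin, Bin) => s.snd) heq
        rw [← r1, ← r2, h1, h2]
    _ = ∑ g ∈ Gset p (n + 1), A p (n + 1 - M p g) := by
        rw [Finset.card_sigma]
        rfl


/-! ### Numeric estimates -/

lemma geo_bound (N : ℕ) :
    ∑ ℓ ∈ Finset.Icc 1 N, ((20000 : ℚ) / 83521) ^ ℓ ≤ 1 / 3 := by
  set q : ℚ := 20000 / 83521 with hqdef
  have hid : ∀ K : ℕ, (1 - q) * ∑ ℓ ∈ Finset.Icc 1 K, q ^ ℓ = q - q ^ (K + 1) := by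
    intro K
    induction K with
    | zero => simp
    | succ K ih =>
      rw [Finset.sum_Icc_succ_top (by omega), mul_add, ih]
      ring
  have hq1 : (0:ℚ) < 1 - q := by norm_num [hqdef]
  have hqpow : (0:ℚ) ≤ q ^ (N + 1) := by positivity
  have hS : (1 - q) * ∑ ℓ ∈ Finset.Icc 1 N, q ^ ℓ ≤ q := by
    rw [hid N]; linarith
  have hq3 : q ≤ (1 - q) * (1 / 3) := by norm_num [hqdef]
  have := le_trans hS hq3
  exact le_of_mul_le_mul_left this hq1

lemma main_ineq {Δ : Type*} [DecidableEq Δ] (p : List Δ) (hp : p ≠ [])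
    (hocc : ∀ v ∈ p, 4 ≤ p.count v) (hd : 2 ≤ p.dedup.length) :
    ∀ n, 17 * A p n ≤ 10 * A p (n + 1) := by
  intro n
  induction n using Nat.strong_induction_on with
  | _ n IH =>
  have chain : ∀ j, j ≤ n → 17 ^ j * A p (n - j) ≤ 10 ^ j * A p n := by
    intro j
    induction j with
    | zero => intro _; simp
    | succ j ihj =>
      intro hj
      have h1 : 17 * A p (n - j - 1) ≤ 10 * A p (n - j - 1 + 1) := IH (n - j - 1) (by omega)
      rw [show n - j - 1 + 1 = n - j by omega] at h1
      calc 17 ^ (j + 1) * A p (n - (j + 1)) = 17 ^ j * (17 * A p (n - j - 1)) := by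
            rw [show n - (j + 1) = n - j - 1 by omega]; ring
        _ ≤ 17 ^ j * (10 * A p (n - j)) := Nat.mul_le_mul_left _ h1
        _ = 10 * (17 ^ j * A p (n - j)) := by ring
        _ ≤ 10 * (10 ^ j * A p n) := Nat.mul_le_mul_left _ (ihj (by omega))
        _ = 10 ^ (j + 1) * A p n := by ring
  set d := p.dedup.length with hddef
  set r : ℚ := 10 / 17 with hrdef
  have hr0 : (0:ℚ) ≤ r := by norm_num [hrdef]
  have hr1 : r ≤ 1 := by norm_num [hrdef]
  have hd0 : 0 < d := by omega
  -- every g in Gset has M p g ∈ [1, n+1]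
  have hM1 : ∀ g ∈ Gset p (n + 1), 1 ≤ M p g ∧ M p g ≤ n + 1 := by
    intro g hg
    rw [Gset, Finset.mem_filter, Fintype.mem_piFinset] at hg
    obtain ⟨hmem, hle⟩ := hg
    refine ⟨?_, hle⟩
    have i0 : Fin d := ⟨0, hd0⟩
    have hcount : 1 ≤ p.count (p.dedup.get i0) :=
      List.count_pos_iff.mpr (List.mem_dedup.mp (List.get_mem p.dedup i0))
    have hlen : 1 ≤ (g i0).length := (mem_WB.mp (hmem i0)).1
    calc 1 ≤ p.count (p.dedup.get i0) * (g i0).length := Nat.one_le_iff_ne_zero.mpr (by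
          intro h
          rcases Nat.mul_eq_zero.mp h with h' | h' <;> omega)
      _ ≤ M p g := Finset.single_le_sum (f := fun j => p.count (p.dedup.get j) * (g j).length)
          (fun _ _ => Nat.zero_le _) (Finset.mem_univ i0)
  -- coefficient bound via the chain
  have hcoef : ∀ g ∈ Gset p (n + 1),
      (A p (n + 1 - M p g) : ℚ) ≤ r ^ (M p g - 1) * (A p n : ℚ) := by
    intro g hg
    obtain ⟨hm1, hmn⟩ := hM1 g hg
    set m := M p g with hmdef
    have hnat := chain (m - 1) (by omega)
    rw [show n - (m - 1) = n + 1 - m by omega] at hnat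
    have hq : ((17:ℚ)) ^ (m - 1) * (A p (n + 1 - m) : ℚ)
        ≤ (10:ℚ) ^ (m - 1) * (A p n : ℚ) := by exact_mod_cast hnat
    have h17 : (0:ℚ) < 17 ^ (m - 1) := by positivity
    have goalform : r ^ (m - 1) * (A p n : ℚ) = (10:ℚ) ^ (m - 1) * (A p n : ℚ) / 17 ^ (m - 1) := by
      rw [hrdef, div_pow, div_mul_eq_mul_div]
    rw [goalform, le_div_iff₀ h17]
    calc (A p (n + 1 - m) : ℚ) * 17 ^ (m - 1) = 17 ^ (m - 1) * (A p (n + 1 - m) : ℚ) := by ring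
      _ ≤ (10:ℚ) ^ (m - 1) * (A p n : ℚ) := hq
  -- the sum of coefficients is at most 17/90
  have key1 : ∀ g ∈ Gset p (n + 1),
      r ^ (M p g - 1) ≤ (17/10 : ℚ) * ∏ i, (r ^ 4) ^ (g i).length := by
    intro g hg
    have hm1 := (hM1 g hg).1
    rw [Gset, Finset.mem_filter, Fintype.mem_piFinset] at hg
    obtain ⟨hmem, -⟩ := hg
    have hpow : r ^ (M p g) ≤ ∏ i, (r ^ 4) ^ (g i).length := by
      rw [M, ← Finset.prod_pow_eq_pow_sum]
      apply Finset.prod_le_prod (fun i _ => by positivity)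
      intro i _
      rw [← pow_mul]
      apply pow_le_pow_of_le_one hr0 hr1
      have h4 : 4 ≤ p.count (p.dedup.get i) :=
        hocc _ (List.mem_dedup.mp (List.get_mem p.dedup i))
      exact Nat.mul_le_mul_right _ h4
    have hstep : r ^ (M p g - 1) = (17/10 : ℚ) * r ^ (M p g) := by
      obtain ⟨k, hk⟩ : ∃ k, M p g = k + 1 := ⟨M p g - 1, by omega⟩
      rw [hk]
      simp only [Nat.add_sub_cancel, pow_succ, hrdef]
      ring
    rw [hstep]
    exact mul_le_mul_of_nonneg_left hpow (by norm_num)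
  -- sum over the pi-finset factorizes
  have hdisj : ∀ a ∈ Finset.Icc 1 (n + 1), ∀ b ∈ Finset.Icc 1 (n + 1), a ≠ b →
      Disjoint (wordFin a) (wordFin b) := by
    intro a _ b _ hab
    rw [Finset.disjoint_left]
    intro w hwa hwb
    rw [mem_wordFin] at hwa hwb
    omega
  have key4 : ∑ w ∈ WB (n + 1), ((r ^ 4 : ℚ)) ^ w.length ≤ 1/3 := by
    rw [WB, Finset.sum_biUnion hdisj]
    have hconst : ∀ ℓ ∈ Finset.Icc 1 (n + 1),
        ∑ w ∈ wordFin ℓ, ((r ^ 4 : ℚ)) ^ w.length = ((20000 : ℚ) / 83521) ^ ℓ := by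
      intro ℓ _
      have hcg : ∀ w ∈ wordFin ℓ, ((r ^ 4 : ℚ)) ^ w.length = (r ^ 4) ^ ℓ := by
        intro w hw; rw [mem_wordFin.mp hw]
      rw [Finset.sum_congr rfl hcg, Finset.sum_const, card_wordFin, nsmul_eq_mul]
      have : ((2 : ℚ) ^ ℓ) * ((r ^ 4) ^ ℓ) = (2 * r ^ 4) ^ ℓ := by rw [mul_pow]
      push_cast
      rw [this, hrdef]
      norm_num
    rw [Finset.sum_congr rfl hconst]
    exact geo_bound (n + 1)
  have hsum : ∑ g ∈ Gset p (n + 1), r ^ (M p g - 1) ≤ 17/90 := by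
    have hWS : (0:ℚ) ≤ ∑ w ∈ WB (n + 1), ((r ^ 4 : ℚ)) ^ w.length :=
      Finset.sum_nonneg (fun w _ => by positivity)
    calc ∑ g ∈ Gset p (n + 1), r ^ (M p g - 1)
        ≤ ∑ g ∈ Gset p (n + 1), (17/10 : ℚ) * ∏ i, (r ^ 4) ^ (g i).length :=
          Finset.sum_le_sum key1
      _ = (17/10 : ℚ) * ∑ g ∈ Gset p (n + 1), ∏ i, (r ^ 4) ^ (g i).length := by
          rw [Finset.mul_sum]
      _ ≤ (17/10 : ℚ) * ∑ g ∈ Fintype.piFinset (fun _ : Fin d => WB (n + 1)),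
            ∏ i, (r ^ 4) ^ (g i).length := by
          apply mul_le_mul_of_nonneg_left _ (by norm_num)
          apply Finset.sum_le_sum_of_subset_of_nonneg (Finset.filter_subset _ _)
          intro g _ _
          positivity
      _ = (17/10 : ℚ) * ∏ _i : Fin d, ∑ w ∈ WB (n + 1), ((r ^ 4 : ℚ)) ^ w.length := by
          rw [Finset.prod_univ_sum]
      _ = (17/10 : ℚ) * (∑ w ∈ WB (n + 1), ((r ^ 4 : ℚ)) ^ w.length) ^ d := by
          rw [Finset.prod_const, Finset.card_univ, Fintype.card_fin]
      _ ≤ (17/10 : ℚ) * (1/3) ^ d := by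
          apply mul_le_mul_of_nonneg_left _ (by norm_num)
          exact pow_le_pow_left₀ hWS key4 d
      _ ≤ (17/10 : ℚ) * (1/3) ^ 2 := by
          apply mul_le_mul_of_nonneg_left _ (by norm_num)
          exact pow_le_pow_of_le_one (by norm_num) (by norm_num) hd
      _ ≤ 17/90 := by norm_num
  -- conclude
  have hA0 : (0:ℚ) ≤ (A p n : ℚ) := by positivity
  have hBq : ((BadSet p n).card : ℚ) ≤ (17/90 : ℚ) * (A p n : ℚ) := by
    have hnat := bad_card_le p hp n
    have hcast : ((BadSet p n).card : ℚ) ≤ ∑ g ∈ Gset p (n + 1), (A p (n + 1 - M p g) : ℚ) := by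
      exact_mod_cast hnat
    calc ((BadSet p n).card : ℚ) ≤ ∑ g ∈ Gset p (n + 1), (A p (n + 1 - M p g) : ℚ) := hcast
      _ ≤ ∑ g ∈ Gset p (n + 1), r ^ (M p g - 1) * (A p n : ℚ) := Finset.sum_le_sum hcoef
      _ = (∑ g ∈ Gset p (n + 1), r ^ (M p g - 1)) * (A p n : ℚ) := by
          rw [Finset.sum_mul]
      _ ≤ (17/90 : ℚ) * (A p n : ℚ) := mul_le_mul_of_nonneg_right hsum hA0
  have hBnat : 10 * (BadSet p n).card ≤ 3 * A p n := by
    have : (10 * (BadSet p n).card : ℚ) ≤ (3 * A p n : ℚ) := by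
      push_cast
      nlinarith [hBq, hA0]
    exact_mod_cast this
  have hpart := partition_eq p n
  omega


/-- Avoiding words of every length exist. -/
lemma exists_avoider {Δ : Type*} [DecidableEq Δ] (p : List Δ) (hp : p ≠ [])
    (hocc : ∀ v ∈ p, 4 ≤ p.count v) :
    ∀ n, ∃ w : List (Fin 2), w.length = n ∧ Avoids w p := by
  intro n
  rcases Nat.lt_or_ge p.dedup.length 2 with h2 | h2
  · -- at most one variable
    have hne : p.dedup ≠ [] := by
      intro h
      exact hp ((List.dedup_eq_nil p).mp h)
    have h1 : p.dedup.length = 1 := by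
      have := List.length_pos_iff.mpr hne
      omega
    obtain ⟨v, hv⟩ := List.length_eq_one_iff.mp h1
    have hall : ∀ a ∈ p, a = v := by
      intro a ha
      have : a ∈ p.dedup := List.mem_dedup.mpr ha
      rw [hv] at this
      simpa using this
    exact ⟨tmWord n, tmWord_length n, part1 hp hocc hall n⟩
  · -- at least two variables: counting argument
    have hApos : ∀ m, 1 ≤ A p m := by
      intro m
      induction m with
      | zero => rw [A_zero hp]
      | succ m ih =>
        have := main_ineq p hp hocc h2 m
        omega
    have hne : (AvSet p n).Nonempty := Finset.card_pos.mp (hApos n)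
    obtain ⟨w, hw⟩ := hne
    rw [mem_AvSet] at hw
    exact ⟨w, hw⟩

end
end AvoidPf

/-- Every pattern in which each occurring variable occurs at least 4 times is
2-avoidable. -/
theorem avoid_two_of_occurrences {Δ : Type*} [DecidableEq Δ]
    (p : List Δ) (hp : p ≠ []) (hocc : ∀ v ∈ p, 4 ≤ p.count v) :
    {w : List (Fin 2) | Avoids w p}.Infinite := by
  have hex := AvoidPf.exists_avoider p hp hocc
  refine Set.infinite_of_injective_forall_mem
    (f := fun n : ℕ => (hex n).choose) ?_ ?_
  · intro a b hab
    have ha := (hex a).choose_spec.1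
    have hb := (hex b).choose_spec.1
    simp only at hab
    rw [← ha, ← hb, hab]
  · intro n
    exact (hex n).choose_spec.2
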